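/- Under Assumptions 1, 2 and 3(b), the second-order Taylor remainder of the gradient of G_h at Γ_m is uniformly quadratically bounded: for all h ∈ ℝ^d and all V ∈ S(H), ‖∇G_h(V) − ∇G_h(Γ_m) − ∇²G_h(Γ_m)(V − Γ_m)‖_F ≤ 6C ‖V − Γ_m‖_F². -/

import Mathlib

open MeasureTheory ProbabilityTheory Filter
open scoped ENNReal NNReal RealInnerProductSpace BigOperators

noncomputable section

/-- The space `S(H)` of `d × d` real matrices, viewed as a Euclidean space, so that its
norm is the Frobenius norm and its inner product `⟪A, B⟫ = ∑ i j, A i j * B i j = tr (Aᵀ B)`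
is the Frobenius inner product. -/
abbrev Mat (d : ℕ) := EuclideanSpace ℝ (Fin d × Fin d)

/-- `Y(h) = (x − h)(x − h)ᵀ`. -/
def Ymat {d : ℕ} (x h : EuclideanSpace ℝ (Fin d)) : Mat d :=
  (WithLp.equiv 2 _).symm (fun p => (x p.1 - h p.1) * (x p.2 - h p.2))

variable {d : ℕ} {Ω : Type*} [MeasurableSpace Ω]

/-- `G_h(V) = E[‖Y(h) − V‖_F − ‖Y(h)‖_F]`. -/
def Gfun (P : Measure Ω) (X : Ω → EuclideanSpace ℝ (Fin d))
    (h : EuclideanSpace ℝ (Fin d)) (V : Mat d) : ℝ :=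
  ∫ ω, (‖Ymat (X ω) h - V‖ - ‖Ymat (X ω) h‖) ∂P

/-- The gradient `∇G_h(V) = −E[(Y(h) − V)/‖Y(h) − V‖_F]`. -/
def gradG (P : Measure Ω) (X : Ω → EuclideanSpace ℝ (Fin d))
    (h : EuclideanSpace ℝ (Fin d)) (V : Mat d) : Mat d :=
  - ∫ ω, ‖Ymat (X ω) h - V‖⁻¹ • (Ymat (X ω) h - V) ∂P

/-- The Hessian operator
`∇²G_h(V)(A) = E[(1/‖Y(h) − V‖_F)(A − ⟪Y(h) − V, A⟫_F (Y(h) − V)/‖Y(h) − V‖_F²)]`. -/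
def hessG (P : Measure Ω) (X : Ω → EuclideanSpace ℝ (Fin d))
    (h : EuclideanSpace ℝ (Fin d)) (V : Mat d) (A : Mat d) : Mat d :=
  ∫ ω, ‖Ymat (X ω) h - V‖⁻¹ •
    (A - (‖Ymat (X ω) h - V‖ ^ 2)⁻¹ • (⟪Ymat (X ω) h - V, A⟫ • (Ymat (X ω) h - V))) ∂P


section helpers
variable {E : Type*} [NormedAddCommGroup E] [InnerProductSpace ℝ E]

variable {E : Type*} [NormedAddCommGroup E] [InnerProductSpace ℝ E]

lemma taylor_id (a b : E) (hna : (0:ℝ) < ‖a‖) (hnb : (0:ℝ) < ‖b‖) :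
    ‖a‖⁻¹ • a - ‖b‖⁻¹ • b - ‖a‖⁻¹ • ((a - b) - (‖a‖ ^ 2)⁻¹ • (⟪a, a - b⟫ • a))
      = ‖a‖⁻¹ • ((-(‖a‖ - ‖b‖ - ⟪a, a - b⟫ / ‖a‖)) • (‖b‖⁻¹ • b)
          + (⟪a, a - b⟫ / ‖a‖) • (‖a‖⁻¹ • a - ‖b‖⁻¹ • b)) := by
  match_scalars
  all_goals field_simp
  all_goals try ring
  all_goals tauto

lemma unit_diff_bound (a b : E) (hna : (0:ℝ) < ‖a‖) (hnb : (0:ℝ) < ‖b‖) :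
    ‖‖a‖⁻¹ • a - ‖b‖⁻¹ • b‖ ≤ 2 * ‖a - b‖ / ‖a‖ := by
  have hid : ‖a‖⁻¹ • a - ‖b‖⁻¹ • b = ‖a‖⁻¹ • (a - b) + (‖a‖⁻¹ - ‖b‖⁻¹) • b := by
    match_scalars <;> (field_simp; try ring)
  have h1 : ‖‖a‖⁻¹ • (a - b)‖ = ‖a - b‖ / ‖a‖ := by
    rw [norm_smul, norm_inv, norm_norm]; ring
  have hle : |‖b‖ - ‖a‖| ≤ ‖a - b‖ := by
    rw [abs_sub_comm]; simpa using abs_norm_sub_norm_le a b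
  have h2 : ‖(‖a‖⁻¹ - ‖b‖⁻¹) • b‖ ≤ ‖a - b‖ / ‖a‖ := by
    rw [norm_smul, Real.norm_eq_abs]
    have e1 : ‖a‖⁻¹ - ‖b‖⁻¹ = (‖b‖ - ‖a‖) / (‖a‖ * ‖b‖) := by field_simp; try ring
    rw [e1, abs_div, abs_of_pos (mul_pos hna hnb)]
    have e2 : |‖b‖ - ‖a‖| / (‖a‖ * ‖b‖) * ‖b‖ = |‖b‖ - ‖a‖| / ‖a‖ := by
      field_simp; try ring
    rw [e2]
    gcongr
  calc ‖‖a‖⁻¹ • a - ‖b‖⁻¹ • b‖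
      = ‖‖a‖⁻¹ • (a - b) + (‖a‖⁻¹ - ‖b‖⁻¹) • b‖ := by rw [hid]
    _ ≤ ‖‖a‖⁻¹ • (a - b)‖ + ‖(‖a‖⁻¹ - ‖b‖⁻¹) • b‖ := norm_add_le _ _
    _ ≤ ‖a - b‖ / ‖a‖ + ‖a - b‖ / ‖a‖ := add_le_add (le_of_eq h1) h2
    _ = 2 * ‖a - b‖ / ‖a‖ := by ring

lemma s_bound (a b : E) (hna : (0:ℝ) < ‖a‖) (hnb : (0:ℝ) < ‖b‖) :
    |‖a‖ - ‖b‖ - ⟪a, a - b⟫ / ‖a‖| ≤ 2 * ‖a - b‖ ^ 2 / ‖a‖ := by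
  set Δ : E := a - b with hΔ
  have hnormsq : ‖b‖ ^ 2 = ‖a‖ ^ 2 - 2 * ⟪a, Δ⟫ + ‖Δ‖ ^ 2 := by
    have : b = a - Δ := by simp [hΔ]
    rw [this, @norm_sub_sq_real]
  have hle : |‖a‖ - ‖b‖| ≤ ‖Δ‖ := by simpa [hΔ] using abs_norm_sub_norm_le a b
  have hcs : |⟪a, Δ⟫| ≤ ‖a‖ * ‖Δ‖ := abs_real_inner_le_norm a Δ
  have hkey : (‖a‖ + ‖b‖) * (‖a‖ - ‖b‖ - ⟪a, Δ⟫ / ‖a‖)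
      = ⟪a, Δ⟫ * (‖a‖ - ‖b‖) / ‖a‖ - ‖Δ‖ ^ 2 := by
    field_simp
    nlinarith [hnormsq]
  have habs : |(‖a‖ + ‖b‖) * (‖a‖ - ‖b‖ - ⟪a, Δ⟫ / ‖a‖)| ≤ 2 * ‖Δ‖ ^ 2 := by
    rw [hkey]
    calc |⟪a, Δ⟫ * (‖a‖ - ‖b‖) / ‖a‖ - ‖Δ‖ ^ 2|
        ≤ |⟪a, Δ⟫ * (‖a‖ - ‖b‖) / ‖a‖| + |‖Δ‖ ^ 2| := abs_sub _ _
      _ ≤ ‖Δ‖ ^ 2 + ‖Δ‖ ^ 2 := by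
          apply add_le_add
          · rw [abs_div, abs_mul, abs_of_pos hna, div_le_iff₀ hna]
            calc |⟪a, Δ⟫| * |‖a‖ - ‖b‖| ≤ (‖a‖ * ‖Δ‖) * ‖Δ‖ :=
                mul_le_mul hcs hle (abs_nonneg _) (by positivity)
              _ = ‖Δ‖ ^ 2 * ‖a‖ := by ring
          · rw [abs_of_nonneg (by positivity)]
      _ = 2 * ‖Δ‖ ^ 2 := by ring
  have hpos : (0:ℝ) < ‖a‖ + ‖b‖ := by linarith
  have hsum : ‖a‖ ≤ ‖a‖ + ‖b‖ := by linarith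
  rw [abs_mul, abs_of_pos hpos] at habs
  calc |‖a‖ - ‖b‖ - ⟪a, Δ⟫ / ‖a‖|
      = (‖a‖ + ‖b‖) * |‖a‖ - ‖b‖ - ⟪a, Δ⟫ / ‖a‖| / (‖a‖ + ‖b‖) := by field_simp
    _ ≤ 2 * ‖Δ‖ ^ 2 / (‖a‖ + ‖b‖) := by gcongr
    _ ≤ 2 * ‖Δ‖ ^ 2 / ‖a‖ := by gcongr

/-- Pointwise second-order Taylor remainder bound for `u ↦ u/‖u‖`. -/
lemma taylor_key (a Δ : E) (ha : a ≠ 0) (hb : a - Δ ≠ 0) :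
    ‖‖a‖⁻¹ • a - ‖a - Δ‖⁻¹ • (a - Δ) -
      ‖a‖⁻¹ • (Δ - (‖a‖ ^ 2)⁻¹ • (⟪a, Δ⟫ • a))‖ ≤ 4 * ‖Δ‖ ^ 2 / ‖a‖ ^ 2 := by
  set b : E := a - Δ with hbdef
  have hna : (0:ℝ) < ‖a‖ := norm_pos_iff.mpr ha
  have hnb : (0:ℝ) < ‖b‖ := norm_pos_iff.mpr hb
  have hΔ : Δ = a - b := by simp [hbdef]
  rw [hΔ, taylor_id a b hna hnb]
  rw [norm_smul, norm_inv, norm_norm]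
  have hbhat : ‖‖b‖⁻¹ • b‖ = 1 := by
    rw [norm_smul, norm_inv, norm_norm, inv_mul_cancel₀ hnb.ne']
  have hcb : |⟪a, a - b⟫ / ‖a‖| ≤ ‖a - b‖ := by
    rw [abs_div, abs_of_pos hna, div_le_iff₀ hna]
    calc |⟪a, a - b⟫| ≤ ‖a‖ * ‖a - b‖ := abs_real_inner_le_norm a (a - b)
      _ = ‖a - b‖ * ‖a‖ := by ring
  have step : ‖(-(‖a‖ - ‖b‖ - ⟪a, a - b⟫ / ‖a‖)) • (‖b‖⁻¹ • b)
      + (⟪a, a - b⟫ / ‖a‖) • (‖a‖⁻¹ • a - ‖b‖⁻¹ • b)‖ ≤ 4 * ‖a - b‖ ^ 2 / ‖a‖ := by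
    calc ‖(-(‖a‖ - ‖b‖ - ⟪a, a - b⟫ / ‖a‖)) • (‖b‖⁻¹ • b)
        + (⟪a, a - b⟫ / ‖a‖) • (‖a‖⁻¹ • a - ‖b‖⁻¹ • b)‖
        ≤ ‖(-(‖a‖ - ‖b‖ - ⟪a, a - b⟫ / ‖a‖)) • (‖b‖⁻¹ • b)‖
          + ‖(⟪a, a - b⟫ / ‖a‖) • (‖a‖⁻¹ • a - ‖b‖⁻¹ • b)‖ := norm_add_le _ _
      _ ≤ 2 * ‖a - b‖ ^ 2 / ‖a‖ + ‖a - b‖ * (2 * ‖a - b‖ / ‖a‖) := by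
          apply add_le_add
          · rw [norm_smul, hbhat, mul_one, Real.norm_eq_abs, abs_neg]
            exact s_bound a b hna hnb
          · rw [norm_smul, Real.norm_eq_abs]
            exact mul_le_mul hcb (unit_diff_bound a b hna hnb)
              (norm_nonneg _) (norm_nonneg _)
      _ = 4 * ‖a - b‖ ^ 2 / ‖a‖ := by ring
  calc ‖a‖⁻¹ * ‖(-(‖a‖ - ‖b‖ - ⟪a, a - b⟫ / ‖a‖)) • (‖b‖⁻¹ • b)
      + (⟪a, a - b⟫ / ‖a‖) • (‖a‖⁻¹ • a - ‖b‖⁻¹ • b)‖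
      ≤ ‖a‖⁻¹ * (4 * ‖a - b‖ ^ 2 / ‖a‖) := by
        apply mul_le_mul_of_nonneg_left step (by positivity)
    _ = 4 * ‖a - b‖ ^ 2 / ‖a‖ ^ 2 := by field_simp; try ring; try tauto


end helpers

section helpers2

variable {Ω : Type*} [MeasurableSpace Ω]

lemma int_of_lintegral (P : Measure Ω) (f : Ω → ℝ) (hf : Measurable f)
    (h0 : ∀ ω, 0 ≤ f ω) (C : ℝ) (hC : 0 ≤ C)
    (hb : ∫⁻ ω, ENNReal.ofReal (f ω) ∂P ≤ ENNReal.ofReal C) :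
    Integrable f P ∧ ∫ ω, f ω ∂P ≤ C := by
  have hint : Integrable f P := by
    refine ⟨hf.aestronglyMeasurable, ?_⟩
    rw [hasFiniteIntegral_iff_norm]
    have : ∀ ω, ENNReal.ofReal ‖f ω‖ = ENNReal.ofReal (f ω) := fun ω => by
      rw [Real.norm_of_nonneg (h0 ω)]
    simp_rw [this]
    exact lt_of_le_of_lt hb ENNReal.ofReal_lt_top
  refine ⟨hint, ?_⟩
  rw [integral_eq_lintegral_of_nonneg_ae (Filter.Eventually.of_forall h0)
    hf.aestronglyMeasurable]
  exact ENNReal.toReal_le_of_le_ofReal hC hb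

variable {E : Type*} [NormedAddCommGroup E]

lemma ofReal_inv_norm_le (x : E) :
    ENNReal.ofReal (‖x‖⁻¹) ≤ (‖x‖₊ : ℝ≥0∞)⁻¹ := by
  rcases eq_or_ne ‖x‖ 0 with hx | hx
  · simp [hx]
  · have hpos : 0 < ‖x‖ := lt_of_le_of_ne (norm_nonneg x) (Ne.symm hx)
    rw [ENNReal.ofReal_inv_of_pos hpos, ofReal_norm, enorm_eq_nnnorm]

lemma ofReal_inv_sq_norm_le (x : E) :
    ENNReal.ofReal ((‖x‖ ^ 2)⁻¹) ≤ ((‖x‖₊ : ℝ≥0∞) ^ 2)⁻¹ := by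
  rcases eq_or_ne ‖x‖ 0 with hx | hx
  · simp [hx]
  · have hpos : 0 < ‖x‖ := lt_of_le_of_ne (norm_nonneg x) (Ne.symm hx)
    rw [ENNReal.ofReal_inv_of_pos (by positivity), ENNReal.ofReal_pow (norm_nonneg x),
      ofReal_norm, enorm_eq_nnnorm]

lemma ae_nonzero {Ω : Type*} [MeasurableSpace Ω] (P : Measure Ω)
    [MeasurableSpace E] [BorelSpace E] {f : Ω → E} (hf : Measurable f) {C : ℝ}
    (hb : ∫⁻ ω, (‖f ω‖₊ : ℝ≥0∞)⁻¹ ∂P ≤ ENNReal.ofReal C) :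
    ∀ᵐ ω ∂P, f ω ≠ 0 := by
  have hmeas : Measurable fun ω => (‖f ω‖₊ : ℝ≥0∞)⁻¹ :=
    (hf.nnnorm.coe_nnreal_ennreal).inv
  have hfin : ∫⁻ ω, (‖f ω‖₊ : ℝ≥0∞)⁻¹ ∂P ≠ ⊤ :=
    (lt_of_le_of_lt hb ENNReal.ofReal_lt_top).ne
  filter_upwards [ae_lt_top hmeas hfin] with ω hω
  intro h0
  rw [h0] at hω
  simp at hω

end helpers2

section helpers3
variable {E : Type*} [NormedAddCommGroup E] [InnerProductSpace ℝ E]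


-- norm of unit vector smul ≤ 1
lemma unit_norm_le_one (u : E) : ‖‖u‖⁻¹ • u‖ ≤ 1 := by
  rcases eq_or_ne u 0 with h | h
  · simp [h]
  · rw [norm_smul, norm_inv, norm_norm, inv_mul_cancel₀ (norm_pos_iff.mpr h).ne']

-- hess integrand bound
lemma hess_integrand_bound (u w : E) :
    ‖‖u‖⁻¹ • (w - (‖u‖ ^ 2)⁻¹ • (⟪u, w⟫ • u))‖ ≤ 2 * ‖w‖ * ‖u‖⁻¹ := by
  rcases eq_or_ne u 0 with h | h
  · simp [h]
  · have hu : (0:ℝ) < ‖u‖ := norm_pos_iff.mpr h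
    rw [norm_smul, norm_inv, norm_norm]
    have hin : ‖(‖u‖ ^ 2)⁻¹ • (⟪u, w⟫ • u)‖ ≤ ‖w‖ := by
      rw [norm_smul, norm_smul, norm_inv, norm_pow, norm_norm, Real.norm_eq_abs]
      calc (‖u‖ ^ 2)⁻¹ * (|⟪u, w⟫| * ‖u‖) ≤ (‖u‖ ^ 2)⁻¹ * ((‖u‖ * ‖w‖) * ‖u‖) := by
            gcongr
            exact abs_real_inner_le_norm u w
        _ = ‖w‖ := by field_simp
    calc ‖u‖⁻¹ * ‖w - (‖u‖ ^ 2)⁻¹ • (⟪u, w⟫ • u)‖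
        ≤ ‖u‖⁻¹ * (‖w‖ + ‖(‖u‖ ^ 2)⁻¹ • (⟪u, w⟫ • u)‖) := by
          gcongr
          exact norm_sub_le _ _
      _ ≤ ‖u‖⁻¹ * (‖w‖ + ‖w‖) := by gcongr
      _ = 2 * ‖w‖ * ‖u‖⁻¹ := by ring

end helpers3

lemma main_est {E : Type*} [NormedAddCommGroup E] [InnerProductSpace ℝ E]
    [MeasurableSpace E] [BorelSpace E] [SecondCountableTopology E] [CompleteSpace E]
    {Ω : Type*} [MeasurableSpace Ω] (P : Measure Ω) [IsProbabilityMeasure P]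
    (Y : Ω → E) (hY : Measurable Y) (Γ V : E) (C : ℝ) (hC : 0 < C)
    (h1 : ∫⁻ ω, (‖Y ω - Γ‖₊ : ℝ≥0∞)⁻¹ ∂P ≤ ENNReal.ofReal C)
    (h2 : ∫⁻ ω, ((‖Y ω - Γ‖₊ : ℝ≥0∞) ^ 2)⁻¹ ∂P ≤ ENNReal.ofReal C)
    (h3 : ∫⁻ ω, (‖Y ω - V‖₊ : ℝ≥0∞)⁻¹ ∂P ≤ ENNReal.ofReal C) :
    ‖(- ∫ ω, ‖Y ω - V‖⁻¹ • (Y ω - V) ∂P) - (- ∫ ω, ‖Y ω - Γ‖⁻¹ • (Y ω - Γ) ∂P)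
      - ∫ ω, ‖Y ω - Γ‖⁻¹ •
          ((V - Γ) - (‖Y ω - Γ‖ ^ 2)⁻¹ • (⟪Y ω - Γ, V - Γ⟫ • (Y ω - Γ))) ∂P‖
      ≤ 6 * C * ‖V - Γ‖ ^ 2 := by
  have haM : Measurable fun ω => Y ω - Γ := hY.sub measurable_const
  have hbM : Measurable fun ω => Y ω - V := hY.sub measurable_const
  -- integrands
  set g1 : Ω → E := fun ω => ‖Y ω - V‖⁻¹ • (Y ω - V) with hg1def
  set g2 : Ω → E := fun ω => ‖Y ω - Γ‖⁻¹ • (Y ω - Γ) with hg2def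
  set g3 : Ω → E := fun ω => ‖Y ω - Γ‖⁻¹ •
    ((V - Γ) - (‖Y ω - Γ‖ ^ 2)⁻¹ • (⟪Y ω - Γ, V - Γ⟫ • (Y ω - Γ))) with hg3def
  have hg1M : Measurable g1 := (hbM.norm.inv).smul hbM
  have hg2M : Measurable g2 := (haM.norm.inv).smul haM
  have hg3M : Measurable g3 := by
    apply (haM.norm.inv).smul
    apply Measurable.sub measurable_const
    exact ((haM.norm.pow_const 2).inv).smul ((haM.inner measurable_const).smul haM)
  -- integrability
  have hg1I : Integrable g1 P :=
    Integrable.mono' (integrable_const 1) hg1M.aestronglyMeasurable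
      (Filter.Eventually.of_forall fun ω => unit_norm_le_one _)
  have hg2I : Integrable g2 P :=
    Integrable.mono' (integrable_const 1) hg2M.aestronglyMeasurable
      (Filter.Eventually.of_forall fun ω => unit_norm_le_one _)
  have hinv1 : Integrable (fun ω => ‖Y ω - Γ‖⁻¹) P ∧
      ∫ ω, ‖Y ω - Γ‖⁻¹ ∂P ≤ C := by
    apply int_of_lintegral P _ haM.norm.inv (fun ω => inv_nonneg.mpr (norm_nonneg _)) C hC.le
    exact le_trans (lintegral_mono fun ω => ofReal_inv_norm_le _) h1
  have hinv2 : Integrable (fun ω => (‖Y ω - Γ‖ ^ 2)⁻¹) P ∧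
      ∫ ω, (‖Y ω - Γ‖ ^ 2)⁻¹ ∂P ≤ C := by
    apply int_of_lintegral P _ ((haM.norm.pow_const 2).inv)
      (fun ω => inv_nonneg.mpr (pow_nonneg (norm_nonneg _) 2)) C hC.le
    exact le_trans (lintegral_mono fun ω => ofReal_inv_sq_norm_le _) h2
  have hg3I : Integrable g3 P := by
    apply Integrable.mono' ((hinv1.1.const_mul (2 * ‖V - Γ‖)))
      hg3M.aestronglyMeasurable
    apply Filter.Eventually.of_forall fun ω => ?_
    calc ‖g3 ω‖ ≤ 2 * ‖V - Γ‖ * ‖Y ω - Γ‖⁻¹ := hess_integrand_bound _ _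
      _ = 2 * ‖V - Γ‖ * ‖Y ω - Γ‖⁻¹ := rfl
  -- rewrite difference of integrals as a single integral
  have hsplit : (- ∫ ω, g1 ω ∂P) - (- ∫ ω, g2 ω ∂P) - ∫ ω, g3 ω ∂P
      = ∫ ω, (g2 ω - g1 ω - g3 ω) ∂P := by
    rw [integral_sub (f := fun ω => g2 ω - g1 ω) (g := g3) (hg2I.sub hg1I) hg3I,
      integral_sub (f := g2) (g := g1) hg2I hg1I]
    abel
  rw [hsplit]
  -- a.e. pointwise bound
  have hae1 : ∀ᵐ ω ∂P, Y ω - Γ ≠ 0 := ae_nonzero P haM h1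
  have hae2 : ∀ᵐ ω ∂P, Y ω - V ≠ 0 := ae_nonzero P hbM h3
  have haebound : ∀ᵐ ω ∂P, ‖g2 ω - g1 ω - g3 ω‖
      ≤ 4 * ‖V - Γ‖ ^ 2 * (‖Y ω - Γ‖ ^ 2)⁻¹ := by
    filter_upwards [hae1, hae2] with ω hω1 hω2
    have hrw : Y ω - V = (Y ω - Γ) - (V - Γ) := by abel
    have hne : (Y ω - Γ) - (V - Γ) ≠ 0 := by rw [← hrw]; exact hω2
    calc ‖g2 ω - g1 ω - g3 ω‖
        = ‖‖Y ω - Γ‖⁻¹ • (Y ω - Γ) - ‖(Y ω - Γ) - (V - Γ)‖⁻¹ • ((Y ω - Γ) - (V - Γ))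
          - ‖Y ω - Γ‖⁻¹ • ((V - Γ) - (‖Y ω - Γ‖ ^ 2)⁻¹ •
            (⟪Y ω - Γ, V - Γ⟫ • (Y ω - Γ)))‖ := by
            simp only [hg1def, hg2def, hg3def]; rw [hrw]
      _ ≤ 4 * ‖V - Γ‖ ^ 2 / ‖Y ω - Γ‖ ^ 2 := taylor_key _ _ hω1 hne
      _ = 4 * ‖V - Γ‖ ^ 2 * (‖Y ω - Γ‖ ^ 2)⁻¹ := div_eq_mul_inv _ _
  -- conclude
  calc ‖∫ ω, (g2 ω - g1 ω - g3 ω) ∂P‖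
      ≤ ∫ ω, ‖g2 ω - g1 ω - g3 ω‖ ∂P := norm_integral_le_integral_norm _
    _ ≤ ∫ ω, 4 * ‖V - Γ‖ ^ 2 * (‖Y ω - Γ‖ ^ 2)⁻¹ ∂P := by
        apply integral_mono_ae ((hg2I.sub hg1I).sub hg3I).norm
          (hinv2.1.const_mul _) haebound
    _ = 4 * ‖V - Γ‖ ^ 2 * ∫ ω, (‖Y ω - Γ‖ ^ 2)⁻¹ ∂P := integral_const_mul _ _
    _ ≤ 4 * ‖V - Γ‖ ^ 2 * C := by
        apply mul_le_mul_of_nonneg_left hinv2.2 (by positivity)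
    _ ≤ 6 * C * ‖V - Γ‖ ^ 2 := by nlinarith [sq_nonneg ‖V - Γ‖, hC]


lemma Ymat_continuous {d : ℕ} (h : EuclideanSpace ℝ (Fin d)) :
    Continuous fun x : EuclideanSpace ℝ (Fin d) => Ymat x h := by
  have h1 : Continuous fun x : EuclideanSpace ℝ (Fin d) =>
      (fun p : Fin d × Fin d => (x p.1 - h p.1) * (x p.2 - h p.2)) := by
    apply continuous_pi
    intro p
    exact ((EuclideanSpace.proj p.1).continuous.sub continuous_const).mul
      ((EuclideanSpace.proj p.2).continuous.sub continuous_const)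
  exact (PiLp.continuous_toLp 2 _).comp h1


/-- Uniform quadratic bound on the second-order Taylor remainder of the gradient of `G_h`
at `Γ_m`: `‖∇G_h(V) − ∇G_h(Γ_m) − ∇²G_h(Γ_m)(V − Γ_m)‖_F ≤ 6C ‖V − Γ_m‖_F²`. -/
theorem stmt_6
    {d : ℕ} (hd : 1 ≤ d) (P : Measure Ω) [IsProbabilityMeasure P]
    (X : Ω → EuclideanSpace ℝ (Fin d)) (hX : Measurable X)
    -- `m` is the geometric median of `X`: the unique minimizer of `u ↦ E[‖X − u‖ − ‖X‖]`
    (m : EuclideanSpace ℝ (Fin d))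
    (hm : ∀ u, (∫ ω, (‖X ω - m‖ - ‖X ω‖) ∂P) ≤ ∫ ω, (‖X ω - u‖ - ‖X ω‖) ∂P)
    (hm_unique : ∀ u, (∀ v, (∫ ω, (‖X ω - u‖ - ‖X ω‖) ∂P) ≤
      ∫ ω, (‖X ω - v‖ - ‖X ω‖) ∂P) → u = m)
    -- `Γ` is the median covariation matrix: the unique minimizer of `G_m`
    (Γ : Mat d)
    (hΓ : ∀ V, Gfun P X m Γ ≤ Gfun P X m V)
    (hΓ_unique : ∀ V, (∀ W, Gfun P X m V ≤ Gfun P X m W) → V = Γ)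
    -- Assumption 1
    (hA1 : ∃ u₁ u₂ : EuclideanSpace ℝ (Fin d), ‖u₁‖ = 1 ∧ ‖u₂‖ = 1 ∧
      LinearIndependent ℝ ![u₁, u₂] ∧
      0 < evariance (fun ω => ⟪u₁, X ω⟫) P ∧ 0 < evariance (fun ω => ⟪u₂, X ω⟫) P)
    -- Assumption 2
    (hA2 : ∃ V₁ V₂ : Mat d, ‖V₁‖ = 1 ∧ ‖V₂‖ = 1 ∧ LinearIndependent ℝ ![V₁, V₂] ∧
      0 < evariance (fun ω => ⟪V₁, Ymat (X ω) m⟫) P ∧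
      0 < evariance (fun ω => ⟪V₂, Ymat (X ω) m⟫) P)
    -- Assumption 3(b)
    (C : ℝ) (hC : 0 < C)
    (hA3 : ∀ (h : EuclideanSpace ℝ (Fin d)) (V : Mat d),
      (∫⁻ ω, (‖Ymat (X ω) h - V‖₊ : ℝ≥0∞)⁻¹ ∂P) ≤ ENNReal.ofReal C ∧
      (∫⁻ ω, ((‖Ymat (X ω) h - V‖₊ : ℝ≥0∞) ^ 2)⁻¹ ∂P) ≤ ENNReal.ofReal C)
    :
    ∀ (h : EuclideanSpace ℝ (Fin d)) (V : Mat d),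
      ‖gradG P X h V - gradG P X h Γ - hessG P X h Γ (V - Γ)‖ ≤ 6 * C * ‖V - Γ‖ ^ 2 := by
  intro h V
  have hYmeas : Measurable fun ω => Ymat (X ω) h :=
    (Ymat_continuous h).measurable.comp hX
  simp only [gradG, hessG]
  exact main_est P _ hYmeas Γ V C hC (hA3 h Γ).1 (hA3 h Γ).2 (hA3 h V).1
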